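/- Let n ≥ 1, 1 < p < ∞, 0 < q₁ < p−1, 0 < q₂ < p−1, 0 < α < n/p, and let σ be a nonnegative Radon measure on ℝⁿ such that, for Lebesgue-a.e. x ∈ ℝⁿ, W_{α,p}((W_{α,p}σ)^{γ₂q₁} dσ)(x) ≤ λ(W_{α,p}σ(x) + (W_{α,p}σ(x))^{γ₁}) for some λ > 0. Then there exists a constant c > 0 depending only on p, q₁ and q₂ such that, for Lebesgue-a.e. x ∈ ℝⁿ, W_{α,p}((W_{α,p}σ)^{q₁} dσ)(x) ≤ c(1+λ)(W_{α,p}σ(x) + (W_{α,p}σ(x))^{γ₁}). -/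

import Mathlib

open MeasureTheory Metric Set ENNReal

noncomputable section

/-- Euclidean space `ℝⁿ`. -/
abbrev Rn (n : ℕ) := EuclideanSpace ℝ (Fin n)

/-- The Wolff potential `W_{α,p}μ(x) = ∫₀^∞ (μ(B(x,t))/t^{n−αp})^{1/(p−1)} dt/t`. -/
def wolff (n : ℕ) (α p : ℝ) (μ : Measure (Rn n)) (x : Rn n) : ℝ≥0∞ :=
  ∫⁻ t in Ioi (0 : ℝ),
    (μ (ball x t) / ENNReal.ofReal (t ^ ((n : ℝ) - α * p))) ^ (1 / (p - 1))
      * ENNReal.ofReal (1 / t)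

/-- `γ₁ = (p−1)(p−1+q₁)/((p−1)²−q₁q₂)`. -/
def gamma1 (p q₁ q₂ : ℝ) : ℝ := (p - 1) * (p - 1 + q₁) / ((p - 1) ^ 2 - q₁ * q₂)

/-- `γ₂ = (p−1)(p−1+q₂)/((p−1)²−q₁q₂)`. -/
def gamma2 (p q₁ q₂ : ℝ) : ℝ := (p - 1) * (p - 1 + q₂) / ((p - 1) ^ 2 - q₁ * q₂)

/-- The Riesz potential `I_β μ(x) = ∫ |x−y|^{β−n} dμ(y)`. -/
def riesz (n : ℕ) (β : ℝ) (μ : Measure (Rn n)) (x : Rn n) : ℝ≥0∞ :=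
  ∫⁻ y, ENNReal.ofReal (‖x - y‖ ^ (β - (n : ℝ))) ∂μ

/-- The `(α,p)`-capacity of a set `E ⊆ ℝⁿ`. -/
def capacity (n : ℕ) (α p : ℝ) (E : Set (Rn n)) : ℝ≥0∞ :=
  ⨅ (f : Rn n → ℝ≥0∞) (_ : Measurable f)
    (_ : ∀ x ∈ E, 1 ≤ riesz n α (volume.withDensity f) x),
    ∫⁻ x, f x ^ p

/-- Condition (F): `∫₁^∞ (σ(B(0,t))/t^{n−αp})^{1/(p−1)} dt/t < ∞`. -/
def condF (n : ℕ) (α p : ℝ) (σ : Measure (Rn n)) : Prop :=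
  ∫⁻ t in Ioi (1 : ℝ),
    (σ (ball (0 : Rn n) t) / ENNReal.ofReal (t ^ ((n : ℝ) - α * p))) ^ (1 / (p - 1))
      * ENNReal.ofReal (1 / t) < ∞

/-- Condition (C): `σ(E) ≤ C_σ · cap_{α,p}(E)` for all compact sets `E`. -/
def condC (n : ℕ) (α p Cσ : ℝ) (σ : Measure (Rn n)) : Prop :=
  ∀ E : Set (Rn n), IsCompact E → σ E ≤ ENNReal.ofReal Cσ * capacity n α p E

/-- `u ∈ L^s_loc(ℝⁿ, dσ)`: `∫_B u^s dσ < ∞` for every ball `B`. -/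
def locIn (n : ℕ) (σ : Measure (Rn n)) (s : ℝ) (u : Rn n → ℝ≥0∞) : Prop :=
  ∀ (x : Rn n) (r : ℝ), ∫⁻ y in ball x r, u y ^ s ∂σ < ∞

/-- `(u,v)` is a solution of the Wolff integral system. -/
def isWolffSol (n : ℕ) (α p q₁ q₂ : ℝ) (σ : Measure (Rn n))
    (u v : Rn n → ℝ≥0∞) : Prop :=
  Measurable u ∧ Measurable v ∧ locIn n σ q₂ u ∧ locIn n σ q₁ v ∧
  (∀ᵐ x ∂σ, u x = wolff n α p (σ.withDensity fun y => v y ^ q₁) x) ∧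
  (∀ᵐ x ∂σ, v x = wolff n α p (σ.withDensity fun y => u y ^ q₂) x)

/-- `(u,v)` is a supersolution of the Wolff integral system. -/
def isWolffSuper (n : ℕ) (α p q₁ q₂ : ℝ) (σ : Measure (Rn n))
    (u v : Rn n → ℝ≥0∞) : Prop :=
  Measurable u ∧ Measurable v ∧ locIn n σ q₂ u ∧ locIn n σ q₁ v ∧
  (∀ᵐ x ∂σ, wolff n α p (σ.withDensity fun y => v y ^ q₁) x ≤ u x) ∧
  (∀ᵐ x ∂σ, wolff n α p (σ.withDensity fun y => u y ^ q₂) x ≤ v x)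

/-- `(u,v)` is nontrivial: neither `u` nor `v` vanishes `σ`-a.e. -/
def nontrivialPair (n : ℕ) (σ : Measure (Rn n)) (u v : Rn n → ℝ≥0∞) : Prop :=
  ¬ (∀ᵐ x ∂σ, u x = 0) ∧ ¬ (∀ᵐ x ∂σ, v x = 0)

/-- Condition (W_λ). -/
def condW (n : ℕ) (α p q₁ q₂ lam : ℝ) (σ : Measure (Rn n)) : Prop :=
  ∀ᵐ x ∂(volume : Measure (Rn n)),
    (wolff n α p (σ.withDensity fun y => (wolff n α p σ y) ^ (gamma2 p q₁ q₂ * q₁)) x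
      ≤ ENNReal.ofReal lam *
        (wolff n α p σ x + (wolff n α p σ x) ^ gamma1 p q₁ q₂)) ∧
    (wolff n α p (σ.withDensity fun y => (wolff n α p σ y) ^ (gamma1 p q₁ q₂ * q₂)) x
      ≤ ENNReal.ofReal lam *
        (wolff n α p σ x + (wolff n α p σ x) ^ gamma2 p q₁ q₂)) ∧
    (wolff n α p σ x + (wolff n α p σ x) ^ gamma1 p q₁ q₂ < ∞) ∧
    (wolff n α p σ x + (wolff n α p σ x) ^ gamma2 p q₁ q₂ < ∞)

lemma wolff_mono' {n : ℕ} {α p : ℝ} (hp : 1 < p) {μ ν : Measure (Rn n)}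
    (h : μ ≤ ν) (x : Rn n) : wolff n α p μ x ≤ wolff n α p ν x := by
  have hp' : (0:ℝ) ≤ 1 / (p - 1) := by
    have : (0:ℝ) < p - 1 := by linarith
    positivity
  refine lintegral_mono fun t => ?_
  gcongr

lemma meas_integrand {n : ℕ} (α p : ℝ) (μ : Measure (Rn n)) (x : Rn n) :
    Measurable fun t : ℝ =>
      (μ (ball x t) / ENNReal.ofReal (t ^ ((n : ℝ) - α * p))) ^ (1 / (p - 1))
        * ENNReal.ofReal (1 / t) := by
  have h1 : Measurable fun t : ℝ => μ (ball x t) :=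
    Monotone.measurable fun s t hst => measure_mono (ball_subset_ball hst)
  have h2 : Measurable fun t : ℝ => ENNReal.ofReal (t ^ ((n : ℝ) - α * p)) := by
    measurability
  exact (((h1.div h2).pow_const _).mul (measurable_const.div measurable_id).ennreal_ofReal)

lemma wolff_add_le' {n : ℕ} {α p : ℝ} (hp : 1 < p) (μ ν : Measure (Rn n)) (x : Rn n) :
    wolff n α p (μ + ν) x ≤
      (2 : ℝ≥0∞) ^ (1 / (p - 1)) * (wolff n α p μ x + wolff n α p ν x) := by
  set r := 1 / (p - 1) with hr
  have hr0 : 0 ≤ r := by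
    have : (0:ℝ) < p - 1 := by linarith
    rw [hr]; positivity
  have key : ∀ t : ℝ,
      ((μ + ν) (ball x t) / ENNReal.ofReal (t ^ ((n : ℝ) - α * p))) ^ r
          * ENNReal.ofReal (1 / t)
        ≤ (2 : ℝ≥0∞) ^ r *
          ((μ (ball x t) / ENNReal.ofReal (t ^ ((n : ℝ) - α * p))) ^ r
              * ENNReal.ofReal (1 / t)
            + (ν (ball x t) / ENNReal.ofReal (t ^ ((n : ℝ) - α * p))) ^ r
              * ENNReal.ofReal (1 / t)) := by
    intro t
    set T := ENNReal.ofReal (t ^ ((n : ℝ) - α * p))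
    have hsum : (μ + ν) (ball x t) / T = μ (ball x t) / T + ν (ball x t) / T := by
      simp [ENNReal.add_div]
    set a := μ (ball x t) / T
    set b := ν (ball x t) / T
    have h1 : (a + b) ^ r ≤ (2 : ℝ≥0∞) ^ r * (a ^ r + b ^ r) := by
      have h2 : a + b ≤ 2 * max a b := by
        rcases le_total a b with h | h
        · calc a + b ≤ b + b := by gcongr
            _ = 2 * b := (two_mul b).symm
            _ ≤ 2 * max a b := by gcongr; exact le_max_right _ _
        · calc a + b ≤ a + a := by gcongr
            _ = 2 * a := (two_mul a).symm
            _ ≤ 2 * max a b := by gcongr; exact le_max_left _ _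
      calc (a + b) ^ r ≤ (2 * max a b) ^ r := ENNReal.rpow_le_rpow h2 hr0
        _ = 2 ^ r * (max a b) ^ r := ENNReal.mul_rpow_of_nonneg _ _ hr0
        _ ≤ 2 ^ r * (a ^ r + b ^ r) := by
            gcongr
            rcases le_total a b with h | h
            · rw [max_eq_right h]; exact le_add_self
            · rw [max_eq_left h]; exact self_le_add_right _ _
    calc ((μ + ν) (ball x t) / T) ^ r * ENNReal.ofReal (1 / t)
        = (a + b) ^ r * ENNReal.ofReal (1 / t) := by rw [hsum]
      _ ≤ (2 : ℝ≥0∞) ^ r * (a ^ r + b ^ r) * ENNReal.ofReal (1 / t) := by gcongr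
      _ = (2 : ℝ≥0∞) ^ r * (a ^ r * ENNReal.ofReal (1 / t) + b ^ r * ENNReal.ofReal (1 / t)) := by
          ring
  calc wolff n α p (μ + ν) x
      ≤ ∫⁻ t in Ioi (0 : ℝ), (2 : ℝ≥0∞) ^ r *
          ((μ (ball x t) / ENNReal.ofReal (t ^ ((n : ℝ) - α * p))) ^ r
              * ENNReal.ofReal (1 / t)
            + (ν (ball x t) / ENNReal.ofReal (t ^ ((n : ℝ) - α * p))) ^ r
              * ENNReal.ofReal (1 / t)) := lintegral_mono fun t => key t
    _ = (2 : ℝ≥0∞) ^ r * (wolff n α p μ x + wolff n α p ν x) := by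
        rw [lintegral_const_mul' _ _ (ENNReal.rpow_lt_top_of_nonneg hr0 (by norm_num)).ne]
        rw [lintegral_add_left (meas_integrand α p μ x)]
        rfl

lemma one_le_gamma2 (p q₁ q₂ : ℝ) (hp : 1 < p) (hq₁ : 0 < q₁) (hq₁' : q₁ < p - 1)
    (hq₂ : 0 < q₂) (hq₂' : q₂ < p - 1) : 1 ≤ gamma2 p q₁ q₂ := by
  have hD : 0 < (p - 1) ^ 2 - q₁ * q₂ := by nlinarith
  rw [gamma2, le_div_iff₀ hD]
  nlinarith

/-- Estimate in the proof of Claim 4: the first inequality of condition (W_λ) implies a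
similar bound for `W_{α,p}((W_{α,p}σ)^{q₁} dσ)`, with a constant depending only on
`p, q₁, q₂` (times `1 + λ`). -/
theorem wolff_q1_estimate (p q₁ q₂ : ℝ)
    (hp : 1 < p) (hq₁ : 0 < q₁) (hq₁' : q₁ < p - 1)
    (hq₂ : 0 < q₂) (hq₂' : q₂ < p - 1) :
    ∃ c : ℝ, 0 < c ∧
      ∀ (n : ℕ), 1 ≤ n →
        ∀ α : ℝ, 0 < α → α < (n : ℝ) / p →
          ∀ lam : ℝ, 0 < lam →
            ∀ σ : Measure (Rn n), IsLocallyFiniteMeasure σ →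
              (∀ᵐ x ∂(volume : Measure (Rn n)),
                wolff n α p (σ.withDensity fun y =>
                  (wolff n α p σ y) ^ (gamma2 p q₁ q₂ * q₁)) x ≤
                  ENNReal.ofReal lam *
                    (wolff n α p σ x + (wolff n α p σ x) ^ gamma1 p q₁ q₂)) →
              ∀ᵐ x ∂(volume : Measure (Rn n)),
                wolff n α p (σ.withDensity fun y => (wolff n α p σ y) ^ q₁) x ≤
                  ENNReal.ofReal (c * (1 + lam)) *
                    (wolff n α p σ x + (wolff n α p σ x) ^ gamma1 p q₁ q₂) := by
  have hp' : (0:ℝ) < p - 1 := by linarith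
  have hr0 : (0:ℝ) ≤ 1 / (p - 1) := by positivity
  refine ⟨(2:ℝ) ^ (1 / (p - 1)), by positivity, ?_⟩
  intro n hn α hα hα' lam hlam σ hσ hcond
  have hγ₂ : 1 ≤ gamma2 p q₁ q₂ := one_le_gamma2 p q₁ q₂ hp hq₁ hq₁' hq₂ hq₂'
  have hq₁γ : q₁ ≤ gamma2 p q₁ q₂ * q₁ := le_mul_of_one_le_left hq₁.le hγ₂
  -- measure comparison
  have hmeas : (σ.withDensity fun y => (wolff n α p σ y) ^ q₁) ≤
      σ + σ.withDensity fun y => (wolff n α p σ y) ^ (gamma2 p q₁ q₂ * q₁) := by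
    have h1 : (σ.withDensity fun y => (wolff n α p σ y) ^ q₁) ≤
        σ.withDensity ((1 : Rn n → ℝ≥0∞) +
          fun y => (wolff n α p σ y) ^ (gamma2 p q₁ q₂ * q₁)) := by
      refine withDensity_mono (ae_of_all _ fun y => ?_)
      show (wolff n α p σ y) ^ q₁ ≤ 1 + (wolff n α p σ y) ^ (gamma2 p q₁ q₂ * q₁)
      rcases le_total (wolff n α p σ y) 1 with h | h
      · exact (ENNReal.rpow_le_one h hq₁.le).trans le_self_add
      · exact (ENNReal.rpow_le_rpow_of_exponent_le h hq₁γ).trans le_add_self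
    rwa [withDensity_add_left measurable_one, withDensity_one] at h1
  filter_upwards [hcond] with x hx
  set W := wolff n α p σ x with hW
  set A := W + W ^ gamma1 p q₁ q₂ with hA
  calc wolff n α p (σ.withDensity fun y => (wolff n α p σ y) ^ q₁) x
      ≤ wolff n α p (σ + σ.withDensity fun y =>
          (wolff n α p σ y) ^ (gamma2 p q₁ q₂ * q₁)) x := wolff_mono' hp hmeas x
    _ ≤ (2 : ℝ≥0∞) ^ (1 / (p - 1)) * (wolff n α p σ x +
          wolff n α p (σ.withDensity fun y =>
            (wolff n α p σ y) ^ (gamma2 p q₁ q₂ * q₁)) x) := wolff_add_le' hp _ _ x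
    _ ≤ (2 : ℝ≥0∞) ^ (1 / (p - 1)) * (A + ENNReal.ofReal lam * A) := by
        have hWA : wolff n α p σ x ≤ A := self_le_add_right W _
        gcongr
    _ = ENNReal.ofReal ((2:ℝ) ^ (1 / (p - 1)) * (1 + lam)) * A := by
        rw [ENNReal.ofReal_mul (by positivity),
          ← ENNReal.ofReal_rpow_of_pos (by norm_num : (0:ℝ) < 2),
          ENNReal.ofReal_ofNat,
          ENNReal.ofReal_add zero_le_one hlam.le, ENNReal.ofReal_one]
        ring
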